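/- For any B-terms e1 and e2, there exists k ≥ 0 such that e1 ∘ (B e2) is βη-equivalent to (B (e1 e2)) ∘ B^k, where B^k denotes the k-fold composition B ∘ B ∘ … ∘ B (with B^0 the identity). -/

import Mathlib

/-- Untyped lambda terms in de Bruijn representation. -/
inductive Lam where
  | var : Nat → Lam
  | app : Lam → Lam → Lam
  | lam : Lam → Lam
deriving DecidableEq

namespace Lam

/-- Lift (shift by one) all free variables with index ≥ `c`. -/
def lift (c : Nat) : Lam → Lam
  | var n => if n < c then var n else var (n + 1)
  | app a b => app (lift c a) (lift c b)
  | lam a => lam (lift (c + 1) a)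

/-- Substitute `s` for the free variable with index `d`. -/
def subst (d : Nat) (s : Lam) : Lam → Lam
  | var n => if n = d then s else if d < n then var (n - 1) else var n
  | app a b => app (subst d s a) (subst d s b)
  | lam a => lam (subst (d + 1) (lift 0 s) a)

/-- One-step βη-reduction (compatible closure of β and η). -/
inductive Step : Lam → Lam → Prop
  | beta (a b : Lam) : Step (app (lam a) b) (subst 0 b a)
  | eta (a : Lam) : Step (lam (app (lift 0 a) (var 0))) a
  | appL {a a' : Lam} (b : Lam) : Step a a' → Step (app a b) (app a' b)
  | appR (a : Lam) {b b' : Lam} : Step b b' → Step (app a b) (app a b')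
  | xi {a a' : Lam} : Step a a' → Step (lam a) (lam a')

/-- βη-equivalence: the equivalence relation generated by one-step βη-reduction. -/
def BetaEtaEq (a b : Lam) : Prop := Relation.EqvGen Step a b

/-- The B combinator λf.λg.λx. f (g x). -/
def B : Lam := lam (lam (lam (app (var 2) (app (var 1) (var 0)))))

/-- `flat X n` is the (n+1)-fold flat left application, i.e. `X_(n+1)`:
`flat X 0 = X = X_(1)` and `flat X (n+1) = (flat X n) X = X_(n+2)`. -/
def flat (X : Lam) : Nat → Lam
  | 0 => X
  | n + 1 => app (flat X n) X

end Lam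

open Lam

/-- B-terms: applicative combinations of the single combinator B. -/
inductive IsBTerm : Lam → Prop
  | base : IsBTerm B
  | app {a b : Lam} : IsBTerm a → IsBTerm b → IsBTerm (app a b)

/-- Composition e1 ∘ e2 = B e1 e2. -/
def comp (a b : Lam) : Lam := app (app B a) b

/-- k-fold composition B ∘ B ∘ … ∘ B, with `cpow 0` the identity λx.x. -/
def cpow : ℕ → Lam
  | 0 => lam (var 0)
  | 1 => B
  | k + 2 => comp B (cpow (k + 1))

namespace Lam

theorem lift_lift (e : Lam) : ∀ c c', c ≤ c' → lift c (lift c' e) = lift (c' + 1) (lift c e) := by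
  induction e with
  | var n =>
    intro c c' h
    simp only [lift]
    split_ifs <;> simp only [lift] <;> split_ifs <;> first | rfl | omega
  | app a b iha ihb => intro c c' h; simp [lift, iha _ _ h, ihb _ _ h]
  | lam a ih => intro c c' h; simp [lift, ih (c+1) (c'+1) (by omega)]

theorem subst_lift (e : Lam) : ∀ d s, subst d s (lift d e) = e := by
  induction e with
  | var n => intro d s; simp only [lift]; split_ifs <;> simp only [subst] <;> split_ifs <;> first | rfl | omega | (congr 1; omega)
  | app a b iha ihb => intro d s; simp [lift, subst, iha, ihb]
  | lam a ih => intro d s; simp [lift, subst, ih]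

theorem eqv_refl (a : Lam) : BetaEtaEq a a := Relation.EqvGen.refl a
theorem eqv_symm {a b} (h : BetaEtaEq a b) : BetaEtaEq b a := Relation.EqvGen.symm _ _ h
theorem eqv_trans {a b c} (h1 : BetaEtaEq a b) (h2 : BetaEtaEq b c) : BetaEtaEq a c :=
  Relation.EqvGen.trans _ _ _ h1 h2
theorem eqv_step {a b} (h : Step a b) : BetaEtaEq a b := Relation.EqvGen.rel _ _ h

theorem eqv_appL {a a'} (b : Lam) (h : BetaEtaEq a a') : BetaEtaEq (app a b) (app a' b) := by
  induction h with
  | rel x y s => exact eqv_step (Step.appL b s)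
  | refl x => exact eqv_refl _
  | symm x y _ ih => exact eqv_symm ih
  | trans x y z _ _ ih1 ih2 => exact eqv_trans ih1 ih2

theorem eqv_appR (a : Lam) {b b'} (h : BetaEtaEq b b') : BetaEtaEq (app a b) (app a b') := by
  induction h with
  | rel x y s => exact eqv_step (Step.appR a s)
  | refl x => exact eqv_refl _
  | symm x y _ ih => exact eqv_symm ih
  | trans x y z _ _ ih1 ih2 => exact eqv_trans ih1 ih2

theorem eqv_xi {a a'} (h : BetaEtaEq a a') : BetaEtaEq (lam a) (lam a') := by
  induction h with
  | rel x y s => exact eqv_step (Step.xi s)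
  | refl x => exact eqv_refl _
  | symm x y _ ih => exact eqv_symm ih
  | trans x y z _ _ ih1 ih2 => exact eqv_trans ih1 ih2

theorem eqv_app {a a' b b'} (h1 : BetaEtaEq a a') (h2 : BetaEtaEq b b') :
    BetaEtaEq (app a b) (app a' b') := eqv_trans (eqv_appL _ h1) (eqv_appR _ h2)

/-- extensionality via η -/
theorem extEq {X Y : Lam}
    (h : BetaEtaEq (app (lift 0 X) (var 0)) (app (lift 0 Y) (var 0))) :
    BetaEtaEq X Y :=
  eqv_trans (eqv_symm (eqv_step (Step.eta X)))
    (eqv_trans (eqv_xi h) (eqv_step (Step.eta Y)))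

@[simp] theorem lift_B (c : Nat) : lift c B = B := by simp [B, lift]

theorem beta3 (a b c : Lam) : BetaEtaEq (app (app (app B a) b) c) (app a (app b c)) := by
  have s1 : Step (app B a) (lam (lam (app (lift 0 (lift 0 a)) (app (var 1) (var 0))))) := by
    have := Step.beta (lam (lam (app (var 2) (app (var 1) (var 0))))) a
    simpa [subst, B] using this
  have s2 : Step (app (lam (lam (app (lift 0 (lift 0 a)) (app (var 1) (var 0))))) b)
      (lam (app (lift 0 a) (app (lift 0 b) (var 0)))) := by
    rw [lift_lift a 0 0 (le_refl 0)]
    have := Step.beta (lam (app (lift 1 (lift 0 a)) (app (var 1) (var 0)))) b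
    simpa [subst, subst_lift] using this
  have s3 : Step (app (lam (app (lift 0 a) (app (lift 0 b) (var 0)))) c) (app a (app b c)) := by
    have := Step.beta (app (lift 0 a) (app (lift 0 b) (var 0))) c
    simpa [subst, subst_lift] using this
  exact eqv_trans (eqv_appL c (eqv_appL b (eqv_step s1)))
    (eqv_trans (eqv_appL c (eqv_step s2)) (eqv_step s3))

end Lam

namespace Lam

theorem eqv_comp {a a' b b'} (h1 : BetaEtaEq a a') (h2 : BetaEtaEq b b') :
    BetaEtaEq (comp a b) (comp a' b') := eqv_app (eqv_appR B h1) h2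

@[simp] theorem lift_comp (c : Nat) (a b : Lam) :
    lift c (comp a b) = comp (lift c a) (lift c b) := by simp [comp, lift, B]

@[simp] theorem lift_I (c : Nat) : lift c (cpow 0) = cpow 0 := by simp [cpow, lift]

theorem beta_I (z : Lam) : BetaEtaEq (app (cpow 0) z) z := by
  have := Step.beta (var 0) z
  exact eqv_step (by simpa [cpow, subst] using this)

theorem comp_assoc (a b c : Lam) :
    BetaEtaEq (comp (comp a b) c) (comp a (comp b c)) := by
  apply extEq
  simp only [lift_comp]
  refine eqv_trans (beta3 _ _ _) (eqv_trans (beta3 _ _ _) (eqv_symm ?_))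
  exact eqv_trans (beta3 _ _ _) (eqv_appR _ (beta3 _ _ _))

theorem compI_right (X : Lam) : BetaEtaEq (comp X (cpow 0)) X := by
  apply extEq
  simp only [lift_comp, lift_I]
  exact eqv_trans (beta3 _ _ _) (eqv_appR _ (beta_I _))

theorem compI_left (X : Lam) : BetaEtaEq (comp (cpow 0) X) X := by
  apply extEq
  simp only [lift_comp, lift_I]
  exact eqv_trans (beta3 _ _ _) (beta_I _)

/-- Functor law: B f ∘ B g ≈ B (f ∘ g). -/
theorem bcomp (f g : Lam) :
    BetaEtaEq (comp (app B f) (app B g)) (app B (comp f g)) := by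
  apply extEq
  simp only [lift_comp, lift, lift_B]
  exact eqv_trans (beta3 _ _ _) (eqv_symm (comp_assoc _ _ _))

theorem baseB (x : Lam) :
    BetaEtaEq (comp B (app B x)) (comp (app B (app B x)) B) := by
  apply extEq
  simp only [lift_comp, lift, lift_B]
  refine eqv_trans (beta3 _ _ _) (eqv_trans (eqv_symm (bcomp _ _)) (eqv_symm (beta3 _ _ _)))

theorem cpow_succ (k : ℕ) : BetaEtaEq (cpow (k + 1)) (comp B (cpow k)) := by
  cases k with
  | zero => exact eqv_symm (compI_right B)
  | succ k => exact eqv_refl _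

theorem cpow_add (m k : ℕ) : BetaEtaEq (comp (cpow m) (cpow k)) (cpow (m + k)) := by
  induction m with
  | zero => simpa using compI_left (cpow k)
  | succ m ih =>
    have h1 : BetaEtaEq (comp (cpow (m + 1)) (cpow k)) (comp (comp B (cpow m)) (cpow k)) :=
      eqv_comp (cpow_succ m) (eqv_refl _)
    have h2 := comp_assoc B (cpow m) (cpow k)
    have h3 : BetaEtaEq (comp B (comp (cpow m) (cpow k))) (comp B (cpow (m + k))) :=
      eqv_comp (eqv_refl _) ih
    have h4 : BetaEtaEq (comp B (cpow (m + k))) (cpow (m + k + 1)) := eqv_symm (cpow_succ _)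
    have : m + 1 + k = m + k + 1 := by omega
    rw [this]
    exact eqv_trans h1 (eqv_trans h2 (eqv_trans h3 h4))

end Lam

open Lam

/-- composition normal forms of B-terms -/
inductive BNF : Lam → Prop
  | b : BNF B
  | ba {a : Lam} : BNF a → BNF (app B a)
  | comp {a b : Lam} : BNF a → BNF b → BNF (comp a b)

theorem bnfApp : ∀ {a : Lam}, BNF a → ∀ {g : Lam}, BNF g →
    ∃ r, BNF r ∧ BetaEtaEq (app a g) r := by
  intro a ha
  induction ha with
  | b => intro g hg; exact ⟨app B g, BNF.ba hg, eqv_refl _⟩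
  | ba h => intro g hg; exact ⟨comp _ g, BNF.comp h hg, eqv_refl _⟩
  | comp h1 h2 ih1 ih2 =>
    intro g hg
    obtain ⟨r2, hr2, e2⟩ := ih2 hg
    obtain ⟨r, hr, e⟩ := ih1 hr2
    exact ⟨r, hr, eqv_trans (beta3 _ _ _) (eqv_trans (eqv_appR _ e2) e)⟩

theorem normBNF : ∀ {e : Lam}, IsBTerm e → ∃ e', BNF e' ∧ BetaEtaEq e e' := by
  intro e he
  induction he with
  | base => exact ⟨B, BNF.b, eqv_refl _⟩
  | app hf hg ihf ihg =>
    obtain ⟨f', hf', ef⟩ := ihf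
    obtain ⟨g', hg', eg⟩ := ihg
    obtain ⟨r, hr, er⟩ := bnfApp hf' hg'
    exact ⟨r, hr, eqv_trans (eqv_app ef eg) er⟩

theorem mainBNF : ∀ {e1 : Lam}, BNF e1 → ∀ e2 : Lam,
    ∃ k : ℕ, BetaEtaEq (comp e1 (app B e2)) (comp (app B (app e1 e2)) (cpow k)) := by
  intro e1 h1
  induction h1 with
  | b =>
    intro e2
    exact ⟨1, baseB e2⟩
  | ba h =>
    intro e2
    exact ⟨0, eqv_trans (bcomp _ e2) (eqv_symm (compI_right _))⟩
  | @comp a b ha hb iha ihb =>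
    intro e2
    obtain ⟨k, hk⟩ := ihb e2
    obtain ⟨m, hm⟩ := iha (app b e2)
    refine ⟨m + k, ?_⟩
    refine eqv_trans (comp_assoc a b (app B e2)) ?_
    refine eqv_trans (eqv_comp (eqv_refl a) hk) ?_
    refine eqv_trans (eqv_symm (comp_assoc a _ _)) ?_
    refine eqv_trans (eqv_comp hm (eqv_refl _)) ?_
    refine eqv_trans (comp_assoc _ _ _) ?_
    refine eqv_trans (eqv_comp (eqv_refl _) (cpow_add m k)) ?_
    exact eqv_comp (eqv_appR B (eqv_symm (beta3 a b e2))) (eqv_refl _)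


/-- For any B-terms e1 and e2, there exists k ≥ 0 such that
e1 ∘ (B e2) is βη-equivalent to (B (e1 e2)) ∘ B^k. -/
theorem stmt19 (e1 e2 : Lam) (h1 : IsBTerm e1) (h2 : IsBTerm e2) :
    ∃ k : ℕ, BetaEtaEq (comp e1 (app B e2)) (comp (app B (app e1 e2)) (cpow k)) := by
  obtain ⟨e1', h1', he1⟩ := normBNF h1
  obtain ⟨k, hk⟩ := mainBNF h1' e2
  refine ⟨k, ?_⟩
  refine eqv_trans (eqv_comp he1 (eqv_refl _)) ?_
  refine eqv_trans hk ?_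
  exact eqv_comp (eqv_appR B (eqv_appL e2 (eqv_symm he1))) (eqv_refl _)
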